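/- arXiv:2510.03061 — 2 statements merged into one kernel-verified Lean document; each statement's English description precedes it below -/
import Mathlib

section
/- Let M be the even-r Kikuchi matrix of a symmetric rank-one tensor λ·v^{⊗r} for a vector v ∈ {±1}^n, i.e., the matrix indexed by ℓ-subsets I, J of {1,...,n} with M[I,J] = λ·∏_{i∈IΔJ} v_i when |I Δ J| = r and 0 otherwise. Let ṽ be the vector with entries ṽ[I] = ∏_{i∈I} v_i. Then the quadratic form ṽᵀ M ṽ / ||ṽ||² equals λ · C(n-ℓ, r/2) · C(ℓ, r/2), provided r is even, r ≤ 2ℓ, and ℓ + r/2 ≤ n. -/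
open Finset Matrix

lemma kik_aux1 {n : ℕ} (I A B : Finset (Fin n)) (hA : A ⊆ I) (hB : Disjoint B I) :
    I \ ((I \ A) ∪ B) = A := by
  ext x
  simp only [Finset.mem_sdiff, Finset.mem_union, not_or, not_and, not_not]
  have hAx : x ∈ A → x ∈ I := @hA x
  have hBx : x ∈ B → x ∉ I := fun h h' => Finset.disjoint_left.1 hB h h'
  tauto

lemma kik_aux2 {n : ℕ} (I A B : Finset (Fin n)) (hA : A ⊆ I) (hB : Disjoint B I) :
    ((I \ A) ∪ B) \ I = B := by
  ext x
  simp only [Finset.mem_sdiff, Finset.mem_union]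
  have hBx : x ∈ B → x ∉ I := fun h h' => Finset.disjoint_left.1 hB h h'
  tauto

lemma kikuchi_count (n ℓ r : ℕ) (hr : Even r) (I : Finset (Fin n)) (hI : I.card = ℓ) :
    ((Finset.univ : Finset {J : Finset (Fin n) // J.card = ℓ}).filter
      (fun J => (symmDiff I J.1).card = r)).card
      = (n - ℓ).choose (r / 2) * ℓ.choose (r / 2) := by
  obtain ⟨k, hk⟩ := hr
  have hk2 : r / 2 = k := by omega
  rw [hk2]
  have hcard : ∀ (J : Finset (Fin n)), J.card = ℓ → (symmDiff I J).card = r →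
      (J \ I).card = k ∧ (I \ J).card = k := by
    intro J hJ hS
    have hdisj : Disjoint (I \ J) (J \ I) := disjoint_sdiff_sdiff
    have h1 : (I \ J).card + (J \ I).card = r := by
      rw [← Finset.card_union_of_disjoint hdisj, ← Finset.sup_eq_union,
        ← symmDiff_def, hS]
    have h2 : (I \ J).card + (I ∩ J).card = I.card := Finset.card_sdiff_add_card_inter I J
    have h3 : (J \ I).card + (J ∩ I).card = J.card := Finset.card_sdiff_add_card_inter J I
    have h4 : (I ∩ J).card = (J ∩ I).card := by rw [Finset.inter_comm]
    omega
  have htarget : ((Iᶜ.powersetCard k) ×ˢ (I.powersetCard k)).card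
      = (n - ℓ).choose k * ℓ.choose k := by
    rw [Finset.card_product, Finset.card_powersetCard, Finset.card_powersetCard,
      Finset.card_compl, hI, Fintype.card_fin]
  rw [← htarget]
  refine Finset.card_bij' (fun J _ => (J.1 \ I, I \ J.1))
    (fun p hp => (⟨(I \ p.2) ∪ p.1, by
      simp only [Finset.mem_product, Finset.mem_powersetCard] at hp
      obtain ⟨⟨hB, hBc⟩, hA, hAc⟩ := hp
      have hdisj : Disjoint (I \ p.2) p.1 := by
        refine Finset.disjoint_left.2 fun x hx hxB => ?_
        have := hB hxB
        simp only [Finset.mem_compl] at this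
        exact this (Finset.mem_sdiff.1 hx).1
      rw [Finset.card_union_of_disjoint hdisj, Finset.card_sdiff_of_subset hA, hI, hAc, hBc]
      have : k ≤ ℓ := by rw [← hI, ← hAc]; exact Finset.card_le_card hA
      omega⟩ : {J : Finset (Fin n) // J.card = ℓ})) ?_ ?_ ?_ ?_
  · intro J hJ
    simp only [Finset.mem_filter, Finset.mem_univ, true_and] at hJ
    obtain ⟨h1, h2⟩ := hcard J.1 J.2 hJ
    simp only [Finset.mem_product, Finset.mem_powersetCard]
    refine ⟨⟨fun x hx => ?_, h1⟩, Finset.sdiff_subset, h2⟩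
    simp only [Finset.mem_sdiff] at hx
    simp [hx.2]
  · intro p hp
    simp only [Finset.mem_product, Finset.mem_powersetCard] at hp
    obtain ⟨⟨hB, hBc⟩, hA, hAc⟩ := hp
    simp only [Finset.mem_filter, Finset.mem_univ, true_and]
    have hBI : Disjoint p.1 I := by
      refine Finset.disjoint_left.2 fun x hx hxI => ?_
      have := hB hx; simp only [Finset.mem_compl] at this; exact this hxI
    have hstep : symmDiff I ((I \ p.2) ∪ p.1) = p.2 ∪ p.1 := by
      rw [symmDiff_def, Finset.sup_eq_union, kik_aux1 I p.2 p.1 hA hBI,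
        kik_aux2 I p.2 p.1 hA hBI]
    rw [hstep, Finset.card_union_of_disjoint, hAc, hBc]
    · omega
    · exact Finset.disjoint_left.2 fun x hx hx' =>
        Finset.disjoint_left.1 hBI hx' (hA hx)
  · intro J hJ
    apply Subtype.ext
    simp only
    rw [Finset.sdiff_sdiff_self_left]
    ext x
    simp only [Finset.mem_union, Finset.mem_inter, Finset.mem_sdiff]
    tauto
  · intro p hp
    simp only [Finset.mem_product, Finset.mem_powersetCard] at hp
    obtain ⟨⟨hB, hBc⟩, hA, hAc⟩ := hp
    have hBI : Disjoint p.1 I := by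
      refine Finset.disjoint_left.2 fun x hx hxI => ?_
      have := hB hx; simp only [Finset.mem_compl] at this; exact this hxI
    simp only
    rw [kik_aux1 I p.2 p.1 hA hBI, kik_aux2 I p.2 p.1 hA hBI]

/-- The quadratic form of the even-`r` Kikuchi matrix of the rank-one tensor `λ·v^{⊗r}`,
evaluated at the vector `ṽ[I] = ∏_{i∈I} v_i` and normalized by `‖ṽ‖²`, equals
`λ · C(n-ℓ, r/2) · C(ℓ, r/2)`. -/
theorem kikuchi_quadratic_form_rank_one (n ℓ r : ℕ) (hr : Even r) (hrℓ : r ≤ 2 * ℓ)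
    (hn : ℓ + r / 2 ≤ n) (lam : ℝ) (v : Fin n → ℝ) (hv : ∀ i, v i = 1 ∨ v i = -1)
    (M : Matrix {I : Finset (Fin n) // I.card = ℓ} {I : Finset (Fin n) // I.card = ℓ} ℝ)
    (hM : ∀ I J, M I J =
      if (symmDiff I.1 J.1).card = r then lam * ∏ i ∈ symmDiff I.1 J.1, v i else 0)
    (vt : {I : Finset (Fin n) // I.card = ℓ} → ℝ)
    (hvt : ∀ I, vt I = ∏ i ∈ I.1, v i) :
    dotProduct vt (M.mulVec vt) / dotProduct vt vt =
      lam * ((n - ℓ).choose (r / 2) * ℓ.choose (r / 2)) := by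
  have hvv : ∀ i, v i * v i = 1 := by intro i; rcases hv i with h | h <;> rw [h] <;> norm_num
  have hsq : ∀ (S : Finset (Fin n)), (∏ i ∈ S, v i) * (∏ i ∈ S, v i) = 1 := by
    intro S; rw [← Finset.prod_mul_distrib]; exact Finset.prod_eq_one fun i _ => hvv i
  have hprod : ∀ (S T : Finset (Fin n)),
      (∏ i ∈ S, v i) * (∏ i ∈ T, v i) = ∏ i ∈ symmDiff S T, v i := by
    intro S T
    have h1 : symmDiff S T ∪ (S ∩ T) = S ∪ T := by
      ext x
      simp only [Finset.mem_union, Finset.mem_inter, Finset.mem_symmDiff]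
      tauto
    have h2 : Disjoint (symmDiff S T) (S ∩ T) := by
      refine Finset.disjoint_left.2 fun x hx hx' => ?_
      simp only [Finset.mem_symmDiff] at hx
      simp only [Finset.mem_inter] at hx'
      tauto
    calc (∏ i ∈ S, v i) * (∏ i ∈ T, v i)
        = (∏ i ∈ S ∪ T, v i) * (∏ i ∈ S ∩ T, v i) := (Finset.prod_union_inter).symm
      _ = ((∏ i ∈ symmDiff S T, v i) * (∏ i ∈ S ∩ T, v i)) * (∏ i ∈ S ∩ T, v i) := by
          rw [← h1, Finset.prod_union h2]
      _ = (∏ i ∈ symmDiff S T, v i) * ((∏ i ∈ S ∩ T, v i) * (∏ i ∈ S ∩ T, v i)) := by ring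
      _ = ∏ i ∈ symmDiff S T, v i := by rw [hsq]; ring
  have hterm : ∀ (I J : {I : Finset (Fin n) // I.card = ℓ}),
      vt I * (M I J * vt J) = if (symmDiff I.1 J.1).card = r then lam else 0 := by
    intro I J
    rw [hM, hvt, hvt]
    split
    · calc (∏ i ∈ I.1, v i) * ((lam * ∏ i ∈ symmDiff I.1 J.1, v i) * ∏ i ∈ J.1, v i)
          = lam * ((∏ i ∈ I.1, v i) * (∏ i ∈ J.1, v i) * ∏ i ∈ symmDiff I.1 J.1, v i) := by
            ring
        _ = lam := by rw [hprod, hsq]; ring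
    · ring
  have hnum : dotProduct vt (M.mulVec vt)
      = (n.choose ℓ : ℝ) * (lam * ((n - ℓ).choose (r / 2) * ℓ.choose (r / 2))) := by
    rw [dotProduct, Finset.sum_congr rfl (fun I _ => ?_)]
    · rw [Finset.sum_const, Finset.card_univ, Fintype.card_finset_len, Fintype.card_fin,
        nsmul_eq_mul]
    · rw [Matrix.mulVec, dotProduct, Finset.mul_sum,
        Finset.sum_congr rfl (fun J _ => hterm I J), ← Finset.sum_filter,
        Finset.sum_const, kikuchi_count n ℓ r hr I.1 I.2, nsmul_eq_mul]
      push_cast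
      ring
  have hden : dotProduct vt vt = (n.choose ℓ : ℝ) := by
    rw [dotProduct, Finset.sum_congr rfl (fun I _ => by rw [hvt, hsq]),
      Finset.sum_const, Finset.card_univ, Fintype.card_finset_len, Fintype.card_fin,
      nsmul_eq_mul, mul_one]
  have hpos : (n.choose ℓ : ℝ) ≠ 0 := by
    have : ℓ ≤ n := le_trans (Nat.le_add_right _ _) hn
    exact_mod_cast (Nat.choose_pos this).ne'
  rw [hnum, hden, mul_div_cancel_left₀ _ hpos]
end

section
/- The spectral norm of the even-r Kikuchi matrix of λ·v^{⊗r} for v ∈ {±1}^n is at least λ · C(n-ℓ, r/2) · C(ℓ, r/2), when λ ≥ 0, r even, r ≤ 2ℓ, ℓ + r/2 ≤ n. -/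
open Finset Matrix

lemma kikuchi_count_aux (n ℓ s : ℕ) (hs : s ≤ ℓ) (I : Finset (Fin n)) (hI : I.card = ℓ) :
    (Finset.univ.filter fun J : {J : Finset (Fin n) // J.card = ℓ} =>
      (symmDiff I J.1).card = 2 * s).card = ℓ.choose s * (n - ℓ).choose s := by
  have hIc : Iᶜ.card = n - ℓ := by rw [Finset.card_compl, hI]; simp
  rw [show ℓ.choose s * (n - ℓ).choose s
      = ((I.powersetCard s) ×ˢ (Iᶜ.powersetCard s)).card by
    rw [Finset.card_product, Finset.card_powersetCard, Finset.card_powersetCard, hI, hIc]]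
  have hcardJ : ∀ p ∈ (I.powersetCard s ×ˢ Iᶜ.powersetCard s),
      ((I \ p.1) ∪ p.2).card = ℓ := by
    rintro ⟨A, B⟩ hp
    simp only [Finset.mem_product, Finset.mem_powersetCard] at hp
    obtain ⟨⟨hA, hAc⟩, hB, hBc⟩ := hp
    have hd : Disjoint (I \ A) B := Finset.disjoint_left.mpr fun x hx hx2 => by
      have := hB hx2; simp only [Finset.mem_compl] at this
      exact this (Finset.mem_sdiff.mp hx).1
    rw [Finset.card_union_of_disjoint hd, Finset.card_sdiff_of_subset hA, hI, hAc, hBc]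
    omega
  refine Finset.card_bij' (fun J _ => (I \ J.1, J.1 \ I))
    (fun p hp => ⟨(I \ p.1) ∪ p.2, hcardJ p hp⟩) ?_ ?_ ?_ ?_
  · intro J hJ
    simp only [Finset.mem_filter] at hJ
    have hcard : (I \ J.1).card = (J.1 \ I).card :=
      Finset.card_sdiff_comm (by rw [hI, J.2])
    have hsum : (I \ J.1).card + (J.1 \ I).card = 2 * s := by
      rw [← hJ.2, symmDiff_def]
      exact (Finset.card_union_of_disjoint disjoint_sdiff_sdiff).symm
    simp only [Finset.mem_product, Finset.mem_powersetCard]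
    refine ⟨⟨Finset.sdiff_subset, by omega⟩, ?_, by omega⟩
    intro x hx
    simp only [Finset.mem_compl]
    exact (Finset.mem_sdiff.mp hx).2
  · rintro ⟨A, B⟩ hp
    have hp' := hp
    simp only [Finset.mem_product, Finset.mem_powersetCard] at hp'
    obtain ⟨⟨hA, hAc⟩, hB, hBc⟩ := hp'
    have hBI : ∀ x ∈ B, x ∉ I := fun x hx => by
      have := hB hx; simpa using this
    have h1 : symmDiff I ((I \ A) ∪ B) = A ∪ B := by
      ext x
      simp only [Finset.mem_symmDiff, Finset.mem_union, Finset.mem_sdiff]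
      constructor
      · rintro (⟨hxI, hx⟩ | ⟨(⟨h3, -⟩ | h), hxI⟩)
        · left; by_contra h; exact hx (Or.inl ⟨hxI, h⟩)
        · exact absurd h3 hxI
        · exact Or.inr h
      · rintro (h | h)
        · exact Or.inl ⟨hA h, fun h2 => h2.elim (fun h3 => h3.2 h) (fun h3 => hBI _ h3 (hA h))⟩
        · exact Or.inr ⟨Or.inr h, hBI _ h⟩
    simp only [Finset.mem_filter, Finset.mem_univ, true_and]
    show (symmDiff I ((I \ A) ∪ B)).card = 2 * s
    rw [h1, Finset.card_union_of_disjoint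
      (Finset.disjoint_left.mpr fun x hx hx2 => hBI _ hx2 (hA hx)), hAc, hBc]
    omega
  · intro J hJ
    apply Subtype.ext
    show (I \ (I \ J.1)) ∪ (J.1 \ I) = J.1
    ext x
    simp only [Finset.sdiff_sdiff_self_left, Finset.mem_union, Finset.mem_inter,
      Finset.mem_sdiff]
    tauto
  · rintro ⟨A, B⟩ hp
    simp only [Finset.mem_product, Finset.mem_powersetCard] at hp
    obtain ⟨⟨hA, hAc⟩, hB, hBc⟩ := hp
    have hBI : ∀ x ∈ B, x ∉ I := fun x hx => by
      have := hB hx; simpa using this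
    have e1 : I \ ((I \ A) ∪ B) = A := by
      ext x
      simp only [Finset.mem_sdiff, Finset.mem_union, not_or]
      constructor
      · rintro ⟨hxI, h1, -⟩; by_contra h; exact h1 ⟨hxI, h⟩
      · intro h; exact ⟨hA h, fun h2 => h2.2 h, fun h2 => hBI _ h2 (hA h)⟩
    have e2 : ((I \ A) ∪ B) \ I = B := by
      ext x
      simp only [Finset.mem_sdiff, Finset.mem_union]
      constructor
      · rintro ⟨h1 | h1, h2⟩
        · exact absurd h1.1 h2
        · exact h1
      · intro h; exact ⟨Or.inr h, hBI _ h⟩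
    simp [e1, e2]

/-- The spectral norm (Euclidean operator norm) of the even-`r` Kikuchi matrix of
`λ·v^{⊗r}` for `v ∈ {±1}^n` is at least `λ · C(n-ℓ, r/2) · C(ℓ, r/2)`. -/
theorem kikuchi_rank_one_spectral_lower_bound (n ℓ r : ℕ) (hr : Even r)
    (hrℓ : r ≤ 2 * ℓ) (hn : ℓ + r / 2 ≤ n) (lam : ℝ) (hlam : 0 ≤ lam)
    (v : Fin n → ℝ) (hv : ∀ i, v i = 1 ∨ v i = -1)
    (M : Matrix {I : Finset (Fin n) // I.card = ℓ} {I : Finset (Fin n) // I.card = ℓ} ℝ)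
    (hM : ∀ I J, M I J =
      if (symmDiff I.1 J.1).card = r then lam * ∏ i ∈ symmDiff I.1 J.1, v i else 0) :
    lam * ((n - ℓ).choose (r / 2) * ℓ.choose (r / 2)) ≤
      ‖(Matrix.toEuclideanLin M).toContinuousLinearMap‖ := by
  have hr2 : 2 * (r / 2) = r := by obtain ⟨k, hk⟩ := hr; omega
  set s := r / 2 with hs
  have hsℓ : s ≤ ℓ := by omega
  set w : EuclideanSpace ℝ {J : Finset (Fin n) // J.card = ℓ} :=
    (WithLp.equiv 2 ({J : Finset (Fin n) // J.card = ℓ} → ℝ)).symm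
      (fun J => ∏ i ∈ J.1, v i) with hw
  have hv2 : ∀ i, v i * v i = 1 := fun i => by rcases hv i with h | h <;> rw [h] <;> norm_num
  have hvne : ∀ i, v i ≠ 0 := fun i => by rcases hv i with h | h <;> rw [h] <;> norm_num
  have hmul : ∀ a b : Finset (Fin n),
      (∏ i ∈ a, v i) * ∏ i ∈ b, v i = ∏ i ∈ symmDiff a b, v i := by
    intro a b
    have ha : ∏ i ∈ a, v i = (∏ i ∈ a \ b, v i) * ∏ i ∈ a ∩ b, v i := by
      rw [← Finset.prod_union (Finset.disjoint_left.mpr fun x hx hx2 =>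
        (Finset.mem_sdiff.mp hx).2 (Finset.mem_inter.mp hx2).2), Finset.sdiff_union_inter]
    have hb : ∏ i ∈ b, v i = (∏ i ∈ b \ a, v i) * ∏ i ∈ a ∩ b, v i := by
      rw [← Finset.prod_union (Finset.disjoint_left.mpr fun x hx hx2 =>
        (Finset.mem_sdiff.mp hx).2 (Finset.mem_inter.mp hx2).1), Finset.inter_comm,
        Finset.sdiff_union_inter]
    have hsq : (∏ i ∈ a ∩ b, v i) * ∏ i ∈ a ∩ b, v i = 1 := by
      rw [← Finset.prod_mul_distrib, Finset.prod_congr rfl fun i _ => hv2 i]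
      simp
    rw [symmDiff_def]
    show _ = ∏ i ∈ (a \ b) ∪ (b \ a), v i
    rw [Finset.prod_union disjoint_sdiff_sdiff, ha, hb]
    calc ((∏ i ∈ a \ b, v i) * ∏ i ∈ a ∩ b, v i) * ((∏ i ∈ b \ a, v i) * ∏ i ∈ a ∩ b, v i)
        = (∏ i ∈ a \ b, v i) * (∏ i ∈ b \ a, v i) *
            ((∏ i ∈ a ∩ b, v i) * ∏ i ∈ a ∩ b, v i) := by ring
      _ = (∏ i ∈ a \ b, v i) * ∏ i ∈ b \ a, v i := by rw [hsq, mul_one]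
  set N : ℝ := (((n - ℓ).choose s * ℓ.choose s : ℕ) : ℝ) with hN
  have heig : (Matrix.toEuclideanLin M) w = (lam * N) • w := by
    rw [hw, WithLp.equiv_symm_apply, Matrix.toEuclideanLin_apply_piLp_toLp]
    have key : M *ᵥ (fun J : {J : Finset (Fin n) // J.card = ℓ} => ∏ i ∈ J.1, v i) =
        fun I : {J : Finset (Fin n) // J.card = ℓ} => (lam * N) * ∏ i ∈ I.1, v i := by
      funext I
      simp only [Matrix.mulVec, dotProduct]
      have step : ∀ J : {J : Finset (Fin n) // J.card = ℓ}, M I J * ∏ i ∈ J.1, v i =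
          if (symmDiff I.1 J.1).card = r then lam * ∏ i ∈ I.1, v i else 0 := by
        intro J
        rw [hM]
        split_ifs with h
        · rw [mul_assoc, hmul, symmDiff_symmDiff_cancel_right]
        · rw [zero_mul]
      rw [Finset.sum_congr rfl fun J _ => step J, ← Finset.sum_filter]
      simp only [Finset.sum_const, nsmul_eq_mul]
      rw [← hr2, kikuchi_count_aux n ℓ s hsℓ I.1 I.2, hN]
      push_cast
      ring
    rw [key]
    rfl
  have hℓn : ℓ ≤ n := by omega
  obtain ⟨J₀, -, hJ₀⟩ := Finset.exists_subset_card_eq (s := (Finset.univ : Finset (Fin n)))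
    (n := ℓ) (by simpa using hℓn)
  have hwne : w ≠ 0 := by
    intro h
    have h0 : (∏ i ∈ J₀, v i) = 0 := by
      have := congrFun (congrArg (WithLp.equiv 2
        ({J : Finset (Fin n) // J.card = ℓ} → ℝ)) h) ⟨J₀, hJ₀⟩
      simpa [hw] using this
    exact (Finset.prod_ne_zero_iff.mpr fun i _ => hvne i) h0
  have hwpos : 0 < ‖w‖ := norm_pos_iff.mpr hwne
  have hle := (Matrix.toEuclideanLin M).toContinuousLinearMap.le_opNorm w
  rw [show ((Matrix.toEuclideanLin M).toContinuousLinearMap :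
      EuclideanSpace ℝ {J : Finset (Fin n) // J.card = ℓ} →
      EuclideanSpace ℝ {J : Finset (Fin n) // J.card = ℓ}) w
      = (Matrix.toEuclideanLin M) w from rfl, heig, norm_smul] at hle
  have hNnn : (0 : ℝ) ≤ lam * N := mul_nonneg hlam (by rw [hN]; positivity)
  rw [Real.norm_eq_abs, abs_of_nonneg hNnn] at hle
  have hfin : lam * N ≤ ‖(Matrix.toEuclideanLin M).toContinuousLinearMap‖ :=
    le_of_mul_le_mul_right hle hwpos
  calc lam * ((n - ℓ).choose (r / 2) * ℓ.choose (r / 2)) = lam * N := by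
        rw [hN]; push_cast; ring
    _ ≤ _ := hfin
end
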